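/- For the S-TFBO iterates, for every t ≥ 1: ‖v_t‖ ≤ (√2/μ)·φ_{t+1} + (√2·C_{f_y}/μ)·√t. -/

import Mathlib

noncomputable section

open scoped RealInnerProductSpace

variable {dx dy : ℕ}

/-- Partial gradient in the first argument. -/
def gX (f : EuclideanSpace ℝ (Fin dx) → EuclideanSpace ℝ (Fin dy) → ℝ)
    (x : EuclideanSpace ℝ (Fin dx)) (y : EuclideanSpace ℝ (Fin dy)) :
    EuclideanSpace ℝ (Fin dx) :=
  gradient (fun x' => f x' y) x

/-- Partial gradient in the second argument. -/
def gY (f : EuclideanSpace ℝ (Fin dx) → EuclideanSpace ℝ (Fin dy) → ℝ)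
    (x : EuclideanSpace ℝ (Fin dx)) (y : EuclideanSpace ℝ (Fin dy)) :
    EuclideanSpace ℝ (Fin dy) :=
  gradient (fun y' => f x y') y

/-- Second derivative `∇_y∇_y g (x,y)` as a linear map `ℝ^{d_y} → ℝ^{d_y}`. -/
def gYY (g : EuclideanSpace ℝ (Fin dx) → EuclideanSpace ℝ (Fin dy) → ℝ)
    (x : EuclideanSpace ℝ (Fin dx)) (y : EuclideanSpace ℝ (Fin dy)) :
    EuclideanSpace ℝ (Fin dy) →L[ℝ] EuclideanSpace ℝ (Fin dy) :=
  fderiv ℝ (fun y' => gY g x y') y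

/-- Mixed second derivative `∇_x∇_y g (x,y)` as a linear map `ℝ^{d_y} → ℝ^{d_x}`. -/
def gXY (g : EuclideanSpace ℝ (Fin dx) → EuclideanSpace ℝ (Fin dy) → ℝ)
    (x : EuclideanSpace ℝ (Fin dx)) (y : EuclideanSpace ℝ (Fin dy)) :
    EuclideanSpace ℝ (Fin dy) →L[ℝ] EuclideanSpace ℝ (Fin dx) :=
  ContinuousLinearMap.adjoint (fderiv ℝ (fun x' => gY g x' y) x)

/-- Hypergradient estimator `∇̄f(x,y,v) := ∇_x f(x,y) − ∇_x∇_y g(x,y) v`. -/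
def barF (f g : EuclideanSpace ℝ (Fin dx) → EuclideanSpace ℝ (Fin dy) → ℝ)
    (x : EuclideanSpace ℝ (Fin dx)) (y v : EuclideanSpace ℝ (Fin dy)) :
    EuclideanSpace ℝ (Fin dx) :=
  gX f x y - gXY g x y v

/-- `∇_v R(x,y,v) = ∇_y∇_y g(x,y) v − ∇_y f(x,y)`. -/
def gradVR (f g : EuclideanSpace ℝ (Fin dx) → EuclideanSpace ℝ (Fin dy) → ℝ)
    (x : EuclideanSpace ℝ (Fin dx)) (y v : EuclideanSpace ℝ (Fin dy)) :
    EuclideanSpace ℝ (Fin dy) :=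
  gYY g x y v - gY f x y

/-- If `m` is monotone and has derivative `d` at `0`, then `0 ≤ d`. -/
lemma monotone_hasDerivAt_nonneg {m : ℝ → ℝ} {d : ℝ} (hm : Monotone m)
    (hd : HasDerivAt m d 0) : 0 ≤ d := by
  have h := hasDerivAt_iff_tendsto_slope.1 hd
  have h2 : Filter.Tendsto (slope m 0) (nhdsWithin 0 (Set.Ioi 0)) (nhds d) :=
    h.mono_left (nhdsWithin_mono _ (fun t ht => ne_of_gt ht))
  refine ge_of_tendsto h2 ?_
  filter_upwards [self_mem_nhdsWithin] with t ht
  have ht0 : (0:ℝ) < t := ht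
  rw [slope_def_field]
  have := hm ht0.le
  apply div_nonneg <;> linarith

/-- Strong convexity implies the Hessian lower bound `μ‖v‖² ≤ ⟪∇²g v, v⟫`. -/
lemma hess_lb {dx dy : ℕ}
    (g : EuclideanSpace ℝ (Fin dx) → EuclideanSpace ℝ (Fin dy) → ℝ)
    (hg : ContDiff ℝ 2 (Function.uncurry g)) {μ : ℝ}
    (hsc : ∀ x, StrongConvexOn Set.univ μ (fun y => g x y))
    (x : EuclideanSpace ℝ (Fin dx)) (y v : EuclideanSpace ℝ (Fin dy)) :
    μ * ‖v‖ ^ 2 ≤ ⟪gYY g x y v, v⟫ := by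
  have hgx : ContDiff ℝ 2 (fun y' => g x y') :=
    hg.comp (contDiff_const.prodMk contDiff_id)
  have hdiffg : Differentiable ℝ (fun y' => g x y') :=
    hgx.differentiable (by norm_num)
  have hfd : ContDiff ℝ 1 (fderiv ℝ (fun y' => g x y')) :=
    hgx.fderiv_right (by norm_num)
  have hgYdiff : Differentiable ℝ (fun y' => gY g x y') :=
    ((InnerProductSpace.toDual ℝ (EuclideanSpace ℝ (Fin dy))).symm.differentiable).comp
      (hfd.differentiable one_ne_zero)
  have hinner : ∀ (p u : EuclideanSpace ℝ (Fin dy)),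
      fderiv ℝ (fun y' => g x y') p u = ⟪gY g x p, u⟫ := by
    intro p u
    rw [gY, gradient, InnerProductSpace.toDual_symm_apply]
  have hline : ∀ t : ℝ, HasDerivAt (fun s : ℝ => y + s • v) v t := by
    intro t
    simpa using ((hasDerivAt_id t).smul_const v).const_add y
  have hq : ∀ t : ℝ, HasDerivAt (fun s : ℝ => g x (y + s • v))
      (⟪gY g x (y + t • v), v⟫) t := by
    intro t
    have := ((hdiffg (y + t • v)).hasFDerivAt).comp_hasDerivAt t (hline t)
    rwa [hinner] at this
  have hy0 : y + (0:ℝ) • v = y := by simp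
  have hm0 : HasDerivAt (fun s : ℝ => ⟪gY g x (y + s • v), v⟫)
      (⟪gYY g x y v, v⟫) 0 := by
    have h1 : HasFDerivAt (fun y' => gY g x y') (gYY g x y) (y + (0:ℝ) • v) := by
      rw [hy0]; exact (hgYdiff y).hasFDerivAt
    have h2 : HasDerivAt (fun s : ℝ => gY g x (y + s • v)) (gYY g x y v) 0 :=
      h1.comp_hasDerivAt 0 (hline 0)
    have h3 := h2.inner ℝ (hasDerivAt_const (0:ℝ) v)
    simpa [hy0] using h3
  have hconv : ConvexOn ℝ Set.univ
      (fun t : ℝ => g x (y + t • v) - μ / 2 * ‖v‖ ^ 2 * t ^ 2) := by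
    refine ⟨convex_univ, ?_⟩
    rintro s - t - a b ha hb hab
    have key := (hsc x).2 (Set.mem_univ (y + s • v)) (Set.mem_univ (y + t • v)) ha hb hab
    have hb1 : b = 1 - a := by linarith
    subst hb1
    have h1 : a • (y + s • v) + (1 - a) • (y + t • v) = y + (a * s + (1 - a) * t) • v := by
      module
    have h2 : ‖(y + s • v) - (y + t • v)‖ = ‖v‖ * |s - t| := by
      have h : (y + s • v) - (y + t • v) = (s - t) • v := by module
      rw [h, norm_smul, Real.norm_eq_abs, mul_comm]
    rw [h1, h2] at key
    simp only [smul_eq_mul] at key ⊢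
    have hEQ : a * (1 - a) * (μ / 2 * (‖v‖ * |s - t|) ^ 2)
        = a * (μ / 2 * ‖v‖ ^ 2 * s ^ 2) + (1 - a) * (μ / 2 * ‖v‖ ^ 2 * t ^ 2)
          - μ / 2 * ‖v‖ ^ 2 * (a * s + (1 - a) * t) ^ 2 := by
      rw [mul_pow, sq_abs]
      ring
    linarith [key, hEQ]
  have hkd : ∀ t : ℝ, HasDerivAt (fun s : ℝ => g x (y + s • v) - μ / 2 * ‖v‖ ^ 2 * s ^ 2)
      (⟪gY g x (y + t • v), v⟫ - μ * ‖v‖ ^ 2 * t) t := by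
    intro t
    have hp : HasDerivAt (fun s : ℝ => μ / 2 * ‖v‖ ^ 2 * s ^ 2) (μ * ‖v‖ ^ 2 * t) t := by
      have := (hasDerivAt_pow 2 t).const_mul (μ / 2 * ‖v‖ ^ 2)
      exact this.congr_deriv (by rw [show (2 - 1 : ℕ) = 1 from rfl]; push_cast; ring)
    exact (hq t).sub hp
  have hmonoOn := hconv.monotoneOn_deriv (fun s _ => (hkd s).differentiableAt)
  have hmono : Monotone (fun t : ℝ => ⟪gY g x (y + t • v), v⟫ - μ * ‖v‖ ^ 2 * t) := by
    intro a b hab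
    have h := hmonoOn (Set.mem_univ a) (Set.mem_univ b) hab
    rwa [(hkd a).deriv, (hkd b).deriv] at h
  have hmd : HasDerivAt (fun t : ℝ => ⟪gY g x (y + t • v), v⟫ - μ * ‖v‖ ^ 2 * t)
      (⟪gYY g x y v, v⟫ - μ * ‖v‖ ^ 2) 0 := by
    have hp : HasDerivAt (fun s : ℝ => μ * ‖v‖ ^ 2 * s) (μ * ‖v‖ ^ 2) 0 := by
      simpa using (hasDerivAt_id (0:ℝ)).const_mul (μ * ‖v‖ ^ 2)
    exact hm0.sub hp
  have := monotone_hasDerivAt_nonneg hmono hmd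
  linarith

/-- rough bound on `v_t` for the S-TFBO iterates. -/
theorem stfbo_v_bound
    (f g : EuclideanSpace ℝ (Fin dx) → EuclideanSpace ℝ (Fin dy) → ℝ)
    (hf : ContDiff ℝ 2 (Function.uncurry f)) (hg : ContDiff ℝ 2 (Function.uncurry g))
    (μ Cfy : ℝ) (hμ : 0 < μ)
    (hsc : ∀ x, StrongConvexOn Set.univ μ (fun y => g x y))
    (hfy_bd : ∀ x y, ‖gY f x y‖ ≤ Cfy)
    (x : ℕ → EuclideanSpace ℝ (Fin dx)) (y v : ℕ → EuclideanSpace ℝ (Fin dy))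
    (α β γ φ : ℕ → ℝ)
    (hα0 : 1 ≤ α 0) (hβ0 : 0 < β 0) (hγ0 : 0 < γ 0) (hφ0 : φ 0 = max (β 0) (γ 0))
    (hβ : ∀ t, β (t + 1) = Real.sqrt ((β t) ^ 2 + ‖gY g (x t) (y t)‖ ^ 2))
    (hγ : ∀ t, γ (t + 1) = Real.sqrt ((γ t) ^ 2 + ‖gradVR f g (x t) (y t) (v t)‖ ^ 2))
    (hφ : ∀ t, φ (t + 1) = max (β (t + 1)) (γ (t + 1)))
    (hα : ∀ t, α (t + 1) = Real.sqrt ((α t) ^ 2 + ‖barF f g (x t) (y t) (v t)‖ ^ 2))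
    (hy : ∀ t, y (t + 1) = y t - (1 / β (t + 1)) • gY g (x t) (y t))
    (hv : ∀ t, v (t + 1) = v t - (1 / φ (t + 1)) • gradVR f g (x t) (y t) (v t))
    (hx : ∀ t, x (t + 1) = x t - (1 / (α (t + 1) * φ (t + 1))) • barF f g (x t) (y t) (v t)) :
    ∀ t : ℕ, 1 ≤ t →
      ‖v t‖ ≤ (Real.sqrt 2 / μ) * φ (t + 1) + (Real.sqrt 2 * Cfy / μ) * Real.sqrt t := by
  intro t ht
  have hCfy : 0 ≤ Cfy := le_trans (norm_nonneg _) (hfy_bd 0 0)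
  have hH := hess_lb g hg hsc (x t) (y t) (v t)
  have h1 : μ * ‖v t‖ ≤ ‖gYY g (x t) (y t) (v t)‖ := by
    rcases eq_or_ne (v t) 0 with h | h
    · simp [h]
    · have hv : 0 < ‖v t‖ := norm_pos_iff.2 h
      have h2 : ⟪gYY g (x t) (y t) (v t), v t⟫ ≤ ‖gYY g (x t) (y t) (v t)‖ * ‖v t‖ :=
        real_inner_le_norm _ _
      nlinarith [hH.trans h2]
  have h3 : ‖gYY g (x t) (y t) (v t)‖ ≤ ‖gradVR f g (x t) (y t) (v t)‖ + Cfy := by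
    have he : gYY g (x t) (y t) (v t) = gradVR f g (x t) (y t) (v t) + gY f (x t) (y t) := by
      simp [gradVR]
    rw [he]
    exact (norm_add_le _ _).trans (by gcongr; exact hfy_bd _ _)
  have h4 : ‖gradVR f g (x t) (y t) (v t)‖ ≤ γ (t + 1) := by
    rw [hγ t, Real.le_sqrt (norm_nonneg _)]
    · nlinarith [sq_nonneg (γ t)]
    · positivity
  have h5 : γ (t + 1) ≤ φ (t + 1) := by rw [hφ t]; exact le_max_right _ _
  have hφnn : 0 ≤ φ (t + 1) := le_trans (le_trans (norm_nonneg _) h4) h5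
  have hmain : μ * ‖v t‖ ≤ φ (t + 1) + Cfy := by linarith [h1, h3, h4, h5]
  have hsq2 : (1:ℝ) ≤ Real.sqrt 2 := by
    rw [show (1:ℝ) = Real.sqrt 1 by simp]
    exact Real.sqrt_le_sqrt (by norm_num)
  have hst : (1:ℝ) ≤ Real.sqrt t := by
    rw [show (1:ℝ) = Real.sqrt 1 by simp]
    exact Real.sqrt_le_sqrt (by exact_mod_cast ht)
  have hfinal : μ * ‖v t‖ ≤
      μ * ((Real.sqrt 2 / μ) * φ (t + 1) + (Real.sqrt 2 * Cfy / μ) * Real.sqrt t) := by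
    have e : μ * ((Real.sqrt 2 / μ) * φ (t + 1) + (Real.sqrt 2 * Cfy / μ) * Real.sqrt t)
        = Real.sqrt 2 * φ (t + 1) + Real.sqrt 2 * Cfy * Real.sqrt t := by
      field_simp
    rw [e]
    have b1 : φ (t + 1) ≤ Real.sqrt 2 * φ (t + 1) := by
      calc φ (t + 1) = 1 * φ (t + 1) := (one_mul _).symm
        _ ≤ Real.sqrt 2 * φ (t + 1) := mul_le_mul_of_nonneg_right hsq2 hφnn
    have b2 : Cfy ≤ Real.sqrt 2 * Cfy * Real.sqrt t := by
      have hnn : 0 ≤ Real.sqrt 2 * Cfy := mul_nonneg (Real.sqrt_nonneg 2) hCfy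
      have c1 : Cfy ≤ Real.sqrt 2 * Cfy := by
        simpa using mul_le_mul_of_nonneg_right hsq2 hCfy
      exact c1.trans (le_mul_of_one_le_right hnn hst)
    linarith
  exact le_of_mul_le_mul_left hfinal hμ
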